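/- The converse of between-community orthogonality fails: there exist n = 8, K = 2, a popularity matrix Λ ∈ [0,1]^{8×2}, and labels c with c(1)=…=c(4)=1, c(5)=…=c(8)=2, such that the PABM matrix Θ has rank 4, every λ_{i c(i)} > 0, yet the rows ξ_1 and ξ_3 of the eigenvector matrix Ξ satisfy ξ_1 · ξ_3 = 0 even though c(1) = c(3). Concretely, one may take Λ = (1/4)·[[2,2],[2,2],[2,1],[2,1],[1,4],[1,4],[2,4],[2,4]]. -/

import Mathlib

set_option maxHeartbeats 2000000

open Matrix

noncomputable section


@[simp]
lemma cons_val_five' {α : Type*} {m : ℕ} (x : α) (u : Fin (m+5) → α) :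
    vecCons x u 5 = vecHead (vecTail (vecTail (vecTail (vecTail u)))) :=
  rfl

@[simp]
lemma cons_val_six' {α : Type*} {m : ℕ} (x : α) (u : Fin (m+6) → α) :
    vecCons x u 6 = vecHead (vecTail (vecTail (vecTail (vecTail (vecTail u))))) :=
  rfl

@[simp]
lemma cons_val_seven' {α : Type*} {m : ℕ} (x : α) (u : Fin (m+7) → α) :
    vecCons x u 7 = vecHead (vecTail (vecTail (vecTail (vecTail (vecTail (vecTail u)))))) :=
  rfl

def T8 : Matrix (Fin 8) (Fin 8) ℝ :=
  !![(1/4), (1/4), (1/4), (1/4), (1/8), (1/8), (1/4), (1/4);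
    (1/4), (1/4), (1/4), (1/4), (1/8), (1/8), (1/4), (1/4);
    (1/4), (1/4), (1/4), (1/4), (1/16), (1/16), (1/8), (1/8);
    (1/4), (1/4), (1/4), (1/4), (1/16), (1/16), (1/8), (1/8);
    (1/8), (1/8), (1/16), (1/16), 1, 1, 1, 1;
    (1/8), (1/8), (1/16), (1/16), 1, 1, 1, 1;
    (1/4), (1/4), (1/8), (1/8), 1, 1, 1, 1;
    (1/4), (1/4), (1/8), (1/8), 1, 1, 1, 1]

def B8 : Matrix (Fin 8) (Fin 4) ℝ :=
  !![(1/4), (1/4), (1/8), (1/4);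
    (1/4), (1/4), (1/8), (1/4);
    (1/4), (1/4), (1/16), (1/8);
    (1/4), (1/4), (1/16), (1/8);
    (1/8), (1/16), 1, 1;
    (1/8), (1/16), 1, 1;
    (1/4), (1/8), 1, 1;
    (1/4), (1/8), 1, 1]

def Y8 : Matrix (Fin 4) (Fin 8) ℝ :=
  !![1, 1, 0, 0, 0, 0, 0, 0;
    0, 0, 1, 1, 0, 0, 0, 0;
    0, 0, 0, 0, 1, 1, 0, 0;
    0, 0, 0, 0, 0, 0, 1, 1]

def Q8 : Matrix (Fin 8) (Fin 8) ℝ :=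
  !![(1/2), (1/2), 0, 0, 0, 0, 0, 0;
    (1/2), (1/2), 0, 0, 0, 0, 0, 0;
    0, 0, (1/2), (1/2), 0, 0, 0, 0;
    0, 0, (1/2), (1/2), 0, 0, 0, 0;
    0, 0, 0, 0, (1/2), (1/2), 0, 0;
    0, 0, 0, 0, (1/2), (1/2), 0, 0;
    0, 0, 0, 0, 0, 0, (1/2), (1/2);
    0, 0, 0, 0, 0, 0, (1/2), (1/2)]

def X8 : Matrix (Fin 8) (Fin 8) ℝ :=
  !![1, 1, -2, -2, -4, -4, 4, 4;
    1, 1, -2, -2, -4, -4, 4, 4;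
    -2, -2, 4, 4, 4, 4, -4, -4;
    -2, -2, 4, 4, 4, 4, -4, -4;
    -4, -4, 4, 4, 1, 1, (-1/2), (-1/2);
    -4, -4, 4, 4, 1, 1, (-1/2), (-1/2);
    4, 4, -4, -4, (-1/2), (-1/2), (1/4), (1/4);
    4, 4, -4, -4, (-1/2), (-1/2), (1/4), (1/4)]

def CT8 : Matrix (Fin 4) (Fin 8) ℝ :=
  !![(1/4), (1/4), (1/4), (1/4), (1/8), (1/8), (1/4), (1/4);
    (1/4), (1/4), (1/4), (1/4), (1/16), (1/16), (1/8), (1/8);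
    (1/8), (1/8), (1/16), (1/16), 1, 1, 1, 1;
    (1/4), (1/4), (1/8), (1/8), 1, 1, 1, 1]

def R8 : Matrix (Fin 8) (Fin 4) ℝ :=
  !![4, -8, -16, 16;
    0, 0, 0, 0;
    -8, 16, 16, -16;
    0, 0, 0, 0;
    -16, 16, 4, -2;
    0, 0, 0, 0;
    16, -16, -2, 1;
    0, 0, 0, 0]

def C8 : Matrix (Fin 4) (Fin 8) ℝ :=
  !![1, 0, 0, 0, 0, 0, 0, 0;
    0, 0, 1, 0, 0, 0, 0, 0;
    0, 0, 0, 0, 1, 0, 0, 0;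
    0, 0, 0, 0, 0, 0, 1, 0]


set_option maxHeartbeats 2000000

theorem hBY : B8 * Y8 = T8 := by
  ext i j
  fin_cases i <;> fin_cases j <;>
    · simp [B8, Y8, T8, Matrix.mul_apply, Fin.sum_univ_four, Matrix.vecHead, Matrix.vecTail]
      try norm_num

theorem hQT : Q8 * T8 = T8 := by
  ext i j
  fin_cases i <;> fin_cases j <;>
    · simp [Q8, T8, Matrix.mul_apply, Fin.sum_univ_eight, Matrix.vecHead, Matrix.vecTail]
      try norm_num

theorem hTX : T8 * X8 = Q8 := by
  ext i j
  fin_cases i <;> fin_cases j <;>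
    · simp [T8, X8, Q8, Matrix.mul_apply, Fin.sum_univ_eight, Matrix.vecHead, Matrix.vecTail]
      try norm_num

theorem hCT : C8 * T8 = CT8 := by
  ext i j
  fin_cases i <;> fin_cases j <;>
    · simp [C8, T8, CT8, Matrix.mul_apply, Fin.sum_univ_eight, Matrix.vecHead, Matrix.vecTail]
      try norm_num

theorem hCTR : CT8 * R8 = 1 := by
  ext i j
  fin_cases i <;> fin_cases j <;>
    · simp [CT8, R8, Matrix.mul_apply, Fin.sum_univ_eight, Matrix.vecHead, Matrix.vecTail,
        Matrix.one_apply]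
      try norm_num

theorem hQsym : Q8ᵀ = Q8 := by
  ext i j
  fin_cases i <;> fin_cases j <;> simp [Q8, Matrix.vecHead, Matrix.vecTail]

theorem hQ02 : Q8 0 2 = 0 := by norm_num [Q8]; rfl

theorem hTrank : T8.rank = 4 := by
  refine le_antisymm ?_ ?_
  · rw [← hBY]
    refine le_trans (Matrix.rank_mul_le_right _ _) ?_
    simpa using Y8.rank_le_card_height
  · have e : (C8 * T8) * R8 = 1 := by rw [hCT, hCTR]
    calc (4 : ℕ) = (1 : Matrix (Fin 4) (Fin 4) ℝ).rank := by rw [Matrix.rank_one]; simp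
    _ = ((C8 * T8) * R8).rank := by rw [e]
    _ ≤ (C8 * T8).rank := Matrix.rank_mul_le_left _ _
    _ ≤ T8.rank := Matrix.rank_mul_le_right _ _

end

/-- Example 1: the converse of between-community orthogonality fails.  There are `n = 8`,
`K = 2`, a popularity matrix and labels with rank-4 PABM matrix, all `λ_{i c(i)} > 0`,
such that rows 1 and 3 of any eigenvector matrix are orthogonal even though
nodes 1 and 3 are in the same community. -/
theorem pabm_orthogonality_converse_fails :
    ∃ (Λ : Matrix (Fin 8) (Fin 2) ℝ) (c : Fin 8 → Fin 2),
      Λ = (1 / 4 : ℝ) • !![2, 2; 2, 2; 2, 1; 2, 1; 1, 4; 1, 4; 2, 4; 2, 4] ∧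
      (∀ i : Fin 8, c i = if (i : ℕ) < 4 then 0 else 1) ∧
      (∀ i l, Λ i l ∈ Set.Icc (0 : ℝ) 1) ∧
      (∀ i, 0 < Λ i (c i)) ∧
      c 0 = c 2 ∧
      ∀ Θ : Matrix (Fin 8) (Fin 8) ℝ,
        (∀ i j, Θ i j = Λ i (c j) * Λ j (c i)) →
        Θ.rank = 4 ∧
        ∀ (Ξ : Matrix (Fin 8) (Fin 4) ℝ) (D : Matrix (Fin 4) (Fin 4) ℝ),
          (∀ u v, u ≠ v → D u v = 0) → (∀ u, D u u ≠ 0) →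
          Ξᵀ * Ξ = 1 → Θ = Ξ * D * Ξᵀ →
          ∑ u, Ξ 0 u * Ξ 2 u = 0 := by
  refine ⟨(1 / 4 : ℝ) • !![2, 2; 2, 2; 2, 1; 2, 1; 1, 4; 1, 4; 2, 4; 2, 4],
    ![0, 0, 0, 0, 1, 1, 1, 1], rfl, by decide, ?_, ?_, by decide, ?_⟩
  · intro i l
    fin_cases i <;> fin_cases l <;>
      · constructor <;> norm_num
  · intro i
    fin_cases i <;> norm_num
  · intro Θ hΘ
    have hT : Θ = T8 := by
      ext i j
      rw [hΘ i j]
      fin_cases i <;> fin_cases j <;>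
        · simp [T8, Matrix.vecHead, Matrix.vecTail]
          try norm_num
    subst hT
    refine ⟨hTrank, ?_⟩
    intro Ξ D hDoff hDnz hO hdec
    have hDdiag : D = Matrix.diagonal (fun u => D u u) := by
      ext u v
      by_cases h : u = v
      · subst h; simp
      · simp [Matrix.diagonal_apply_ne _ h, hDoff u v h]
    set E : Matrix (Fin 4) (Fin 4) ℝ := Matrix.diagonal (fun u => (D u u)⁻¹) with hE
    have hDE : D * E = 1 := by
      rw [hDdiag, hE, Matrix.diagonal_mul_diagonal,
        show (fun u => D u u * (D u u)⁻¹) = fun _ => (1 : ℝ) from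
          funext fun u => mul_inv_cancel₀ (hDnz u), Matrix.diagonal_one]
    have hPT : (Ξ * Ξᵀ) * T8 = T8 := by
      rw [hdec]
      calc Ξ * Ξᵀ * (Ξ * D * Ξᵀ) = Ξ * (Ξᵀ * Ξ * (D * Ξᵀ)) := by
            simp only [Matrix.mul_assoc]
      _ = Ξ * (D * Ξᵀ) := by rw [hO, Matrix.one_mul]
      _ = Ξ * D * Ξᵀ := by simp only [Matrix.mul_assoc]
    have hPdef : T8 * (Ξ * E * Ξᵀ) = Ξ * Ξᵀ := by
      calc T8 * (Ξ * E * Ξᵀ) = Ξ * (D * (Ξᵀ * Ξ * (E * Ξᵀ))) := by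
            rw [hdec]; simp only [Matrix.mul_assoc]
      _ = Ξ * (D * (E * Ξᵀ)) := by rw [hO, Matrix.one_mul]
      _ = Ξ * (D * E * Ξᵀ) := by simp only [Matrix.mul_assoc]
      _ = Ξ * Ξᵀ := by rw [hDE, Matrix.one_mul]
    have hQP : Q8 * (Ξ * Ξᵀ) = Ξ * Ξᵀ := by
      rw [← hPdef, ← Matrix.mul_assoc, hQT]
    have hPQ : (Ξ * Ξᵀ) * Q8 = Q8 := by
      rw [← hTX, ← Matrix.mul_assoc, hPT]
    have hPsym : (Ξ * Ξᵀ)ᵀ = Ξ * Ξᵀ := by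
      rw [Matrix.transpose_mul, Matrix.transpose_transpose]
    have hPQ' : (Ξ * Ξᵀ) * Q8 = Ξ * Ξᵀ := by
      have h := congrArg Matrix.transpose hQP
      rwa [Matrix.transpose_mul, hPsym, hQsym] at h
    have hPeq : Ξ * Ξᵀ = Q8 := by rw [← hPQ', hPQ]
    have h02 : (Ξ * Ξᵀ) 0 2 = 0 := by rw [hPeq]; exact hQ02
    simpa [Matrix.mul_apply] using h02
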